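/- Let R be a Metzler matrix all of whose eigenvalues have negative real part (so R is invertible), and let P be an entrywise nonnegative matrix of the same size. Then λ_max(R + P) < 0 if and only if ρ(R^{-1} P) < 1, where ρ denotes the spectral radius. -/

import Mathlib

open Matrix

def IsMetzler {n : Type*} [Fintype n] [DecidableEq n] (M : Matrix n n ℝ) : Prop :=
  ∀ i j, i ≠ j → 0 ≤ M i j

def IsIrreducibleMatrix {n : Type*} [Fintype n] (M : Matrix n n ℝ) : Prop :=
  ∀ i j : n, Relation.ReflTransGen (fun a b => a ≠ b ∧ M a b ≠ 0) i j

def IsEigOf {n : Type*} [Fintype n] (M : Matrix n n ℝ) (μ : ℂ) : Prop :=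
  ∃ v : n → ℂ, v ≠ 0 ∧ M.map (Complex.ofReal) *ᵥ v = μ • v

noncomputable def lamMax {n : Type*} [Fintype n] (M : Matrix n n ℝ) : ℝ :=
  sSup {x : ℝ | ∃ μ : ℂ, IsEigOf M μ ∧ x = μ.re}

noncomputable def specRad {n : Type*} [Fintype n] (M : Matrix n n ℝ) : ℝ :=
  sSup {x : ℝ | ∃ μ : ℂ, IsEigOf M μ ∧ x = ‖μ‖}

noncomputable def Cplus {V E : Type*} [DecidableEq V] (tgt : E → V) : Matrix V E ℝ :=
  fun i ℓ => if tgt ℓ = i then 1 else 0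

noncomputable def Cminus {V E : Type*} [DecidableEq V] (src : E → V) : Matrix V E ℝ :=
  fun i ℓ => if src ℓ = i then 1 else 0

noncomputable def nbMatrix {V E : Type*} [DecidableEq V] (src tgt : E → V) : Matrix E E ℝ :=
  fun ℓ m => if tgt ℓ = src m ∧ tgt m ≠ src ℓ then 1 else 0

noncomputable def lineAdj {V E : Type*} [DecidableEq V] (src tgt : E → V) : Matrix E E ℝ :=
  fun ℓ m => if tgt ℓ = src m then 1 else 0

set_option linter.unusedSectionVars false
section
open Filter
open scoped ENNReal NNReal

namespace Helper
variable {n : Type*} [Fintype n] [DecidableEq n] [Nonempty n]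
attribute [local instance] Matrix.linftyOpNormedAddCommGroup Matrix.linftyOpNormedRing Matrix.linftyOpNormedAlgebra

theorem map_pow' (M : Matrix n n ℝ) (k : ℕ) :
    (M.map Complex.ofReal) ^ k = (M ^ k).map Complex.ofReal := by
  have : ∀ (Q : Matrix n n ℝ), Q.map Complex.ofReal = Complex.ofRealHom.mapMatrix Q :=
    fun Q => rfl
  rw [this, this, ← map_pow]

theorem norm_map' (M : Matrix n n ℝ) : ‖M.map Complex.ofReal‖ = ‖M‖ := by
  rw [Matrix.linfty_opNorm_def, Matrix.linfty_opNorm_def]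
  congr 1
  apply Finset.sup_congr rfl
  intro i _
  apply Finset.sum_congr rfl
  intro j _
  simp [Matrix.map_apply]

theorem entry_norm_le (M : Matrix n n ℂ) (i j : n) : ‖M i j‖ ≤ ‖M‖ := by
  have : ‖M i j‖₊ ≤ ‖M‖₊ := by
    rw [Matrix.linfty_opNNNorm_def]
    calc ‖M i j‖₊ ≤ ∑ k, ‖M i k‖₊ :=
          Finset.single_le_sum (f := fun k => ‖M i k‖₊) (by simp) (by simp)
      _ ≤ _ := Finset.le_sup (f := fun i => ∑ k, ‖M i k‖₊) (Finset.mem_univ i)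
  exact_mod_cast this

theorem entry_norm_le' (M : Matrix n n ℝ) (i j : n) : ‖M i j‖ ≤ ‖M‖ := by
  have := entry_norm_le (M.map Complex.ofReal) i j
  rw [norm_map'] at this
  simpa [Matrix.map_apply] using this


theorem entry_norm_le_gen {α : Type*} [NormedRing α] (M : Matrix n n α) (i j : n) :
    ‖M i j‖ ≤ ‖M‖ := by
  have : ‖M i j‖₊ ≤ ‖M‖₊ := by
    rw [Matrix.linfty_opNNNorm_def]
    calc ‖M i j‖₊ ≤ ∑ k, ‖M i k‖₊ :=
          Finset.single_le_sum (f := fun k => ‖M i k‖₊) (by simp) (by simp)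
      _ ≤ _ := Finset.le_sup (f := fun i => ∑ k, ‖M i k‖₊) (Finset.mem_univ i)
  exact_mod_cast this

theorem hasSum_entry {α : Type*} [NormedRing α] {f : ℕ → Matrix n n α} {S : Matrix n n α}
    (h : HasSum f S) (i j : n) : HasSum (fun k => f k i j) (S i j) := by
  have φcont : Continuous (fun M : Matrix n n α => M i j) := by
    apply AddMonoidHomClass.continuous_of_bound (AddMonoidHom.mk' (fun M : Matrix n n α => M i j)
      (fun a b => rfl)) 1
    intro M
    rw [one_mul]; exact entry_norm_le_gen M i j
  exact h.map (AddMonoidHom.mk' (fun M : Matrix n n α => M i j) (fun a b => rfl)) φcont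


theorem mem_spec_iff (M : Matrix n n ℂ) (μ : ℂ) :
    μ ∈ spectrum ℂ M ↔ ∃ v, v ≠ 0 ∧ M *ᵥ v = μ • v := by
  rw [spectrum.mem_iff, Matrix.isUnit_iff_isUnit_det, isUnit_iff_ne_zero, not_not,
    ← Matrix.exists_mulVec_eq_zero_iff]
  have key : ∀ v : n → ℂ, (algebraMap ℂ (Matrix n n ℂ) μ - M) *ᵥ v = μ • v - M *ᵥ v := by
    intro v
    rw [Matrix.sub_mulVec, Algebra.algebraMap_eq_smul_one, Matrix.smul_mulVec,
      Matrix.one_mulVec]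
  constructor
  · rintro ⟨v, hv, h⟩
    exact ⟨v, hv, by rw [key] at h; linear_combination (norm := module) -h⟩
  · rintro ⟨v, hv, h⟩
    exact ⟨v, hv, by rw [key, h]; module⟩

theorem geom_inverse {A : Type*} [NormedRing A] [CompleteSpace A] (x : A) {r : ℝ}
    (hr0 : 0 ≤ r) (hr : r < 1) (h : ∀ᶠ k in Filter.atTop, ‖x ^ k‖ ≤ r ^ k) :
    Summable (fun k => x ^ k) ∧ (1 - x) * (∑' k, x ^ k) = 1 ∧ (∑' k, x ^ k) * (1 - x) = 1 := by
  have hsum : Summable (fun k => x ^ k) :=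
    Summable.of_norm_bounded_eventually_nat (g := fun k => r ^ k)
      (summable_geometric_of_lt_one hr0 hr) h
  have htail : ∑' k : ℕ, x ^ (k + 1) = (∑' k : ℕ, x ^ k) - 1 := by
    have := Summable.tsum_eq_zero_add hsum
    rw [pow_zero] at this
    rw [this]; abel
  have hxS : x * (∑' k : ℕ, x ^ k) = ∑' k : ℕ, x ^ (k + 1) := by
    rw [← (hsum.hasSum.mul_left x).tsum_eq]
    exact tsum_congr fun k => by rw [← pow_succ']
  have hSx : (∑' k : ℕ, x ^ k) * x = ∑' k : ℕ, x ^ (k + 1) := by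
    rw [← (hsum.hasSum.mul_right x).tsum_eq]
    exact tsum_congr fun k => by rw [← pow_succ]
  refine ⟨hsum, ?_, ?_⟩
  · rw [sub_mul, one_mul, hxS, htail]; abel
  · rw [mul_sub, mul_one, hSx, htail]; abel

theorem eventually_pow_norm_le (B : Matrix n n ℂ) {s : ℝ} (hs : 0 < s)
    (h : ∀ ν ∈ spectrum ℂ B, ‖ν‖ < s) :
    ∃ r : ℝ, 0 ≤ r ∧ r < s ∧ ∀ᶠ k in Filter.atTop, ‖B ^ k‖ ≤ r ^ k := by
  have hρ : spectralRadius ℂ B < (s.toNNReal : ℝ≥0∞) := by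
    apply spectrum.spectralRadius_lt_of_forall_lt
    intro z hz
    have := h z hz
    rw [← coe_nnnorm] at this
    exact_mod_cast (by rwa [Real.coe_toNNReal _ hs.le] : (‖z‖₊ : ℝ) < (s.toNNReal : ℝ))
  obtain ⟨q, hq1, hq2⟩ := ENNReal.lt_iff_exists_nnreal_btwn.mp hρ
  have hgel := spectrum.pow_nnnorm_pow_one_div_tendsto_nhds_spectralRadius B
  have hev : ∀ᶠ k : ℕ in atTop, (‖B ^ k‖₊ : ℝ≥0∞) ^ (1 / (k : ℝ)) < (q : ℝ≥0∞) :=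
    hgel.eventually_lt_const hq1
  refine ⟨q, q.coe_nonneg, ?_, ?_⟩
  · have h3 : q < s.toNNReal := ENNReal.coe_lt_coe.mp hq2
    calc (q:ℝ) < (s.toNNReal : ℝ) := by exact_mod_cast h3
      _ = s := Real.coe_toNNReal _ hs.le
  · filter_upwards [hev, eventually_ge_atTop 1] with k hk hk1
    have hkpos : (0:ℝ) < (k : ℝ) := by exact_mod_cast hk1
    have h1 : ((‖B ^ k‖₊ : ℝ≥0∞) ^ (1 / (k : ℝ))) ^ (k : ℝ) < (q : ℝ≥0∞) ^ (k : ℝ) :=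
      ENNReal.rpow_lt_rpow hk hkpos
    rw [← ENNReal.rpow_mul, one_div_mul_cancel hkpos.ne', ENNReal.rpow_one] at h1
    have h2 : (‖B ^ k‖₊ : ℝ≥0∞) < ((q ^ (k:ℕ) : ℝ≥0) : ℝ≥0∞) := by
      rwa [ENNReal.coe_pow, ← ENNReal.rpow_natCast]
    rw [ENNReal.coe_lt_coe] at h2
    calc ‖B ^ k‖ = (‖B ^ k‖₊ : ℝ) := (coe_nnnorm _).symm
      _ ≤ ((q ^ k : ℝ≥0) : ℝ) := by exact_mod_cast h2.le
      _ = (q:ℝ) ^ k := by push_cast; ring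


theorem pow_entries_nonneg {N : Matrix n n ℝ} (hN : ∀ i j, 0 ≤ N i j) (k : ℕ) :
    ∀ i j, 0 ≤ (N ^ k) i j := by
  induction k with
  | zero => intro i j; rw [pow_zero]; by_cases h : i = j <;> simp [Matrix.one_apply, h]
  | succ m ih =>
    intro i j
    rw [pow_succ, Matrix.mul_apply]
    exact Finset.sum_nonneg fun l _ => mul_nonneg (ih i l) (hN l j)

theorem metzler_key (M : Matrix n n ℝ) (hMet : ∀ i j, i ≠ j → 0 ≤ M i j)
    (hH : ∀ μ ∈ spectrum ℂ (M.map Complex.ofReal), μ.re < 0) :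
    ∃ G : Matrix n n ℝ,
      (∀ i j, 0 ≤ G i j) ∧ G * M = -1 ∧ M * G = -1 ∧
      ∀ μ : ℂ, 0 ≤ μ.re → ∃ Sc : Matrix n n ℂ,
        Sc * (μ • 1 - M.map Complex.ofReal) = 1 ∧ ∀ i j, ‖Sc i j‖ ≤ G i j := by
  set Mc := M.map Complex.ofReal with hMcdef
  -- Step 1: choose s
  have hKc : IsCompact (spectrum ℂ Mc) := spectrum.isCompact Mc
  have hne : (spectrum ℂ Mc).Nonempty := spectrum.nonempty Mc
  have hgcont : ContinuousOn (fun z : ℂ => ‖z‖ ^ 2 / (-2 * z.re)) (spectrum ℂ Mc) := by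
    apply ContinuousOn.div
    · fun_prop
    · fun_prop
    · intro z hz
      have := hH z hz
      intro hc
      nlinarith
  obtain ⟨μ₀, hμ₀mem, hμ₀'⟩ := hKc.exists_isMaxOn hne hgcont
  have hμ₀ : ∀ μ ∈ spectrum ℂ Mc, ‖μ‖ ^ 2 / (-2 * μ.re) ≤ ‖μ₀‖ ^ 2 / (-2 * μ₀.re) := hμ₀'
  set s0 := ‖μ₀‖ ^ 2 / (-2 * μ₀.re) with hs0def
  have hs00 : 0 ≤ s0 := by
    have := hH μ₀ hμ₀mem
    apply div_nonneg (by positivity)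
    nlinarith
  set d := Finset.univ.sup' Finset.univ_nonempty (fun i => -M i i) with hddef
  set s := 1 + max s0 d with hsdef
  have hs : 0 < s := by
    have : 0 ≤ max s0 d := le_trans hs00 (le_max_left _ _)
    linarith
  have hsd : ∀ i, 0 ≤ s + M i i := by
    intro i
    have : -M i i ≤ d := Finset.le_sup' (fun i => -M i i) (Finset.mem_univ i)
    have h2 : -M i i ≤ max s0 d := le_trans this (le_max_right _ _)
    simp only [hsdef]
    linarith
  have hsg : ∀ μ ∈ spectrum ℂ Mc, ‖μ + s‖ < s := by
    intro μ hμ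
    have hre : μ.re < 0 := hH μ hμ
    have hg : ‖μ‖ ^ 2 / (-2 * μ.re) ≤ s0 := hμ₀ μ hμ
    have hgs : ‖μ‖ ^ 2 / (-2 * μ.re) < s := by
      have : s0 ≤ max s0 d := le_max_left _ _
      simp only [hsdef]; linarith
    have hkey : ‖μ‖ ^ 2 < s * (-2 * μ.re) := by
      rw [div_lt_iff₀ (by linarith)] at hgs
      linarith [hgs]
    have habs : ∀ z : ℂ, ‖z‖ ^ 2 = z.re ^ 2 + z.im ^ 2 := fun z => by
      rw [Complex.sq_norm, Complex.normSq_apply]; ring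
    have hnorm2 : ‖μ + (s:ℂ)‖ ^ 2 = (μ.re + s) ^ 2 + μ.im ^ 2 := by
      rw [habs]; simp
    have hnormμ : ‖μ‖ ^ 2 = μ.re ^ 2 + μ.im ^ 2 := habs μ
    have hlt : ‖μ + (s:ℂ)‖ ^ 2 < s ^ 2 := by
      rw [hnorm2]
      nlinarith [hnormμ, hkey]
    exact lt_of_pow_lt_pow_left₀ 2 hs.le hlt
  -- Step 2: the nonnegative matrix N
  set N := s • (1 : Matrix n n ℝ) + M with hNdef
  have hN : ∀ i j, 0 ≤ N i j := by
    intro i j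
    by_cases h : i = j
    · subst h; simpa [hNdef, Matrix.one_apply] using hsd i
    · simpa [hNdef, Matrix.one_apply, h] using hMet i j h
  have hmapN : N.map Complex.ofReal = (s : ℂ) • 1 + Mc := by
    ext i j
    by_cases h : i = j <;>
      simp [hNdef, hMcdef, Matrix.map_apply, Matrix.one_apply, h]
  have hspecN : ∀ ν ∈ spectrum ℂ (N.map Complex.ofReal), ‖ν‖ < s := by
    intro ν hν
    rw [mem_spec_iff] at hν
    obtain ⟨v, hv, hνv⟩ := hν
    have hshift : Mc *ᵥ v = (ν - s) • v := by
      rw [hmapN, Matrix.add_mulVec, Matrix.smul_mulVec, Matrix.one_mulVec] at hνv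
      linear_combination (norm := module) hνv
    have hmem : ν - s ∈ spectrum ℂ Mc := (mem_spec_iff Mc (ν - s)).mpr ⟨v, hv, hshift⟩
    have := hsg (ν - s) hmem
    simpa using this
  -- Step 3: Gelfand bound
  obtain ⟨r, hr0, hrs, hrev⟩ := eventually_pow_norm_le (N.map Complex.ofReal) hs hspecN
  have hNpownorm : ∀ k, ‖N ^ k‖ = ‖(N.map Complex.ofReal) ^ k‖ := by
    intro k
    rw [map_pow', norm_map']
  -- Step 4: real geometric series
  set x := s⁻¹ • N with hxdef
  have hxpow : ∀ k, x ^ k = (s⁻¹) ^ k • N ^ k := fun k => smul_pow _ _ _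
  have hxnorm : ∀ᶠ k in atTop, ‖x ^ k‖ ≤ (r / s) ^ k := by
    filter_upwards [hrev] with k hk
    rw [hxpow, norm_smul]
    have : ‖N ^ k‖ ≤ r ^ k := by rw [hNpownorm]; exact hk
    have h1 : |s⁻¹ ^ k| = (s⁻¹) ^ k := abs_of_nonneg (by positivity)
    rw [Real.norm_eq_abs, h1, div_pow]
    calc s⁻¹ ^ k * ‖N ^ k‖ ≤ s⁻¹ ^ k * r ^ k := by
          apply mul_le_mul_of_nonneg_left this (by positivity)
      _ = r ^ k / s ^ k := by rw [div_eq_mul_inv, inv_pow]; ring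
  obtain ⟨hTsum, hT1, hT2⟩ := geom_inverse x (by positivity) (by
    rw [div_lt_one hs]; exact hrs) hxnorm
  set T := ∑' k, x ^ k with hTdef
  have h1x : (1 : Matrix n n ℝ) - x = s⁻¹ • (-M) := by
    rw [hxdef, hNdef, smul_add, smul_smul, inv_mul_cancel₀ hs.ne', one_smul]
    simp [smul_neg]
  set G := s⁻¹ • T with hGdef
  have hMG : M * G = -1 := by
    have : (s⁻¹ • (-M)) * T = 1 := by rw [← h1x]; exact hT1
    rw [Matrix.smul_mul, neg_mul] at this
    have h2 : M * G = M * (s⁻¹ • T) := rfl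
    rw [h2, mul_smul_comm]
    linear_combination (norm := module) -this
  have hGM : G * M = -1 := by
    have : T * (s⁻¹ • (-M)) = 1 := by rw [← h1x]; exact hT2
    rw [mul_smul_comm, mul_neg] at this
    have h2 : G * M = (s⁻¹ • T) * M := rfl
    rw [h2, Matrix.smul_mul]
    linear_combination (norm := module) -this
  have hTentry : ∀ i j, HasSum (fun k => (s⁻¹) ^ k * (N ^ k) i j) (T i j) := by
    intro i j
    have := hasSum_entry hTsum.hasSum i j
    rw [show (fun k => (s⁻¹) ^ k * (N ^ k) i j) = fun k => (x ^ k) i j from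
      funext fun k => by rw [hxpow]; simp [Matrix.smul_apply]]
    exact this
  have hGpos : ∀ i j, 0 ≤ G i j := by
    intro i j
    have hTij : 0 ≤ T i j := by
      have := (hTentry i j)
      have h0 : ∀ k, 0 ≤ (s⁻¹) ^ k * (N ^ k) i j := fun k =>
        mul_nonneg (by positivity) (pow_entries_nonneg hN k i j)
      rw [← this.tsum_eq]
      exact tsum_nonneg h0
    have : G i j = s⁻¹ * T i j := rfl
    rw [this]
    positivity
  -- Step 5: complex resolvent bound
  refine ⟨G, hGpos, hGM, hMG, ?_⟩
  intro μ hμre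
  set c : ℂ := μ + s with hcdef
  have hcre : (s : ℝ) ≤ c.re := by simp [hcdef]; linarith
  have hcnorm : s ≤ ‖c‖ := le_trans hcre (by
    exact Complex.re_le_norm c)
  have hc0 : c ≠ 0 := by
    intro h
    rw [h] at hcnorm
    simp at hcnorm
    linarith
  set Nc := N.map Complex.ofReal with hNcdef
  set y := c⁻¹ • Nc with hydef
  have hypow : ∀ k, y ^ k = (c⁻¹) ^ k • Nc ^ k := fun k => smul_pow _ _ _
  have hynorm : ∀ᶠ k in atTop, ‖y ^ k‖ ≤ (r / s) ^ k := by
    filter_upwards [hrev] with k hk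
    rw [hypow, norm_smul, norm_pow, norm_inv]
    have hcinv : ‖c‖⁻¹ ≤ s⁻¹ := by
      apply inv_anti₀ hs hcnorm
    calc ‖c‖⁻¹ ^ k * ‖Nc ^ k‖ ≤ s⁻¹ ^ k * r ^ k := by
          apply mul_le_mul (pow_le_pow_left₀ (by positivity) hcinv k) hk (norm_nonneg _)
            (by positivity)
      _ = (r / s) ^ k := by rw [div_pow, div_eq_mul_inv, inv_pow]; ring
  obtain ⟨hUsum, hU1, hU2⟩ := geom_inverse y (by positivity) (by
    rw [div_lt_one hs]; exact hrs) hynorm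
  set U := ∑' k, y ^ k with hUdef
  set Sc := c⁻¹ • U with hScdef
  have hkey : μ • (1 : Matrix n n ℂ) - Mc = c • 1 - Nc := by
    rw [hmapN, hcdef, add_smul]
    push_cast
    abel
  have h1y : (1 : Matrix n n ℂ) - y = c⁻¹ • (c • 1 - Nc) := by
    rw [hydef, smul_sub, smul_smul, inv_mul_cancel₀ hc0, one_smul]
  refine ⟨Sc, ?_, ?_⟩
  · have h3 : Sc * (c • 1 - Nc) = U * (c⁻¹ • (c • 1 - Nc)) := by
      rw [hScdef, Matrix.smul_mul, mul_smul_comm]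
    rw [hkey, h3, ← h1y]
    exact hU2
  · intro i j
    have hUentry : HasSum (fun k => (c⁻¹) ^ k * ((N ^ k) i j : ℂ)) (U i j) := by
      have := hasSum_entry hUsum.hasSum i j
      rw [show (fun k => (c⁻¹) ^ k * ((N ^ k) i j : ℂ)) = fun k => (y ^ k) i j from
        funext fun k => by rw [hypow, hNcdef, map_pow']; simp [Matrix.smul_apply, Matrix.map_apply]]
      exact this
    have hnormterm : ∀ k, ‖(c⁻¹) ^ k * ((N ^ k) i j : ℂ)‖ = ‖c‖⁻¹ ^ k * (N ^ k) i j := by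
      intro k
      rw [norm_mul, norm_pow, norm_inv, Complex.norm_real, Real.norm_eq_abs,
        abs_of_nonneg (pow_entries_nonneg hN k i j)]
    have hmaj : ∀ k, ‖c‖⁻¹ ^ k * (N ^ k) i j ≤ s⁻¹ ^ k * (N ^ k) i j := by
      intro k
      apply mul_le_mul_of_nonneg_right _ (pow_entries_nonneg hN k i j)
      exact pow_le_pow_left₀ (by positivity) (inv_anti₀ hs hcnorm) k
    have hmajsum : Summable (fun k => s⁻¹ ^ k * (N ^ k) i j) := ⟨T i j, hTentry i j⟩
    have hnsum : Summable (fun k => ‖(c⁻¹) ^ k * ((N ^ k) i j : ℂ)‖) := by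
      apply Summable.of_nonneg_of_le (fun k => norm_nonneg _) _ hmajsum
      intro k
      rw [hnormterm]
      exact hmaj k
    have hUb : ‖U i j‖ ≤ T i j := by
      have h1 : ‖U i j‖ ≤ ∑' k, ‖(c⁻¹) ^ k * ((N ^ k) i j : ℂ)‖ := by
        rw [← hUentry.tsum_eq]
        exact norm_tsum_le_tsum_norm hnsum
      have h2 : ∑' k, ‖(c⁻¹) ^ k * ((N ^ k) i j : ℂ)‖ ≤ T i j := by
        rw [← (hTentry i j).tsum_eq]
        apply hnsum.tsum_le_tsum _ hmajsum
        intro k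
        rw [hnormterm]
        exact hmaj k
      linarith
    have hScentry : ‖Sc i j‖ = ‖c‖⁻¹ * ‖U i j‖ := by
      have : Sc i j = c⁻¹ * U i j := rfl
      rw [this, norm_mul, norm_inv]
    rw [hScentry]
    have : G i j = s⁻¹ * T i j := rfl
    rw [this]
    apply mul_le_mul (inv_anti₀ hs hcnorm) hUb (norm_nonneg _) (by positivity)


theorem exists_eig_ge_one {A : Matrix n n ℝ} (hA : ∀ i j, 0 ≤ A i j)
    {w : n → ℝ} (hw0 : ∀ i, 0 ≤ w i) (hwne : w ≠ 0) (hle : ∀ i, w i ≤ (A *ᵥ w) i) :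
    ∃ ν ∈ spectrum ℂ (A.map Complex.ofReal), 1 ≤ ‖ν‖ := by
  have hiter : ∀ k i, w i ≤ ((A ^ k) *ᵥ w) i := by
    intro k
    induction k with
    | zero => intro i; simp [Matrix.one_mulVec]
    | succ m ih =>
      intro i
      have h1 : ((A ^ (m + 1)) *ᵥ w) i = (A *ᵥ ((A ^ m) *ᵥ w)) i := by
        rw [pow_succ', ← Matrix.mulVec_mulVec]
      rw [h1]
      calc w i ≤ (A *ᵥ w) i := hle i
        _ ≤ (A *ᵥ ((A ^ m) *ᵥ w)) i := by
            simp only [Matrix.mulVec, dotProduct]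
            exact Finset.sum_le_sum fun j _ =>
              mul_le_mul_of_nonneg_left (ih j) (hA i j)
  obtain ⟨i0, _, hi0⟩ := Finset.exists_max_image Finset.univ w ⟨Classical.arbitrary n, Finset.mem_univ _⟩
  have hi0' : ∀ j, w j ≤ w i0 := fun j => hi0 j (Finset.mem_univ j)
  have hpos : 0 < w i0 := by
    rcases Function.ne_iff.mp hwne with ⟨i, hi⟩
    have : 0 < w i := lt_of_le_of_ne (hw0 i) (by simpa using (Ne.symm hi))
    exact lt_of_lt_of_le this (hi0' i)
  have hrowsum : ∀ k, 1 ≤ ∑ j, (A ^ k) i0 j := by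
    intro k
    have h1 : w i0 ≤ ∑ j, (A ^ k) i0 j * w j := hiter k i0
    have h2 : ∑ j, (A ^ k) i0 j * w j ≤ (∑ j, (A ^ k) i0 j) * w i0 := by
      rw [Finset.sum_mul]
      exact Finset.sum_le_sum fun j _ =>
        mul_le_mul_of_nonneg_left (hi0' j) (pow_entries_nonneg hA k i0 j)
    have := le_trans h1 h2
    rw [← mul_le_mul_iff_left₀ hpos, one_mul]
    exact le_trans h1 h2
  have hnn : ∀ k : ℕ, (1 : ℝ≥0) ≤ ‖(A.map Complex.ofReal) ^ k‖₊ := by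
    intro k
    rw [map_pow', Matrix.linfty_opNNNorm_def]
    have hrow : (1 : ℝ≥0) ≤ ∑ j, ‖(A ^ k).map Complex.ofReal i0 j‖₊ := by
      have : ∀ j, ‖(A ^ k).map Complex.ofReal i0 j‖₊ = ((A ^ k) i0 j).toNNReal := by
        intro j
        simp only [Matrix.map_apply]
        ext
        simp [Real.norm_eq_abs, abs_of_nonneg (pow_entries_nonneg hA k i0 j),
          Real.coe_toNNReal _ (pow_entries_nonneg hA k i0 j)]
      rw [show (∑ j, ‖(A ^ k).map Complex.ofReal i0 j‖₊) = ∑ j, ((A ^ k) i0 j).toNNReal from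
        Finset.sum_congr rfl fun j _ => this j]
      have : ((1:ℝ).toNNReal) ≤ (∑ j, (A ^ k) i0 j).toNNReal :=
        Real.toNNReal_mono (hrowsum k)
      rw [Real.toNNReal_one] at this
      rwa [← Real.toNNReal_sum_of_nonneg fun j _ => pow_entries_nonneg hA k i0 j]
    exact le_trans hrow (Finset.le_sup (f := fun i => ∑ j, ‖(A ^ k).map Complex.ofReal i j‖₊)
      (Finset.mem_univ i0))
  have hρ : (1 : ℝ≥0∞) ≤ spectralRadius ℂ (A.map Complex.ofReal) := by
    have hgel := spectrum.pow_nnnorm_pow_one_div_tendsto_nhds_spectralRadius (A.map Complex.ofReal)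
    apply ge_of_tendsto hgel
    filter_upwards [eventually_ge_atTop 1] with k hk1
    have hkpos : (0:ℝ) < (k:ℝ) := by exact_mod_cast hk1
    have h1 : (1:ℝ≥0∞) ≤ (‖(A.map Complex.ofReal) ^ k‖₊ : ℝ≥0∞) := by
      exact_mod_cast hnn k
    calc (1:ℝ≥0∞) = 1 ^ (1/(k:ℝ)) := (ENNReal.one_rpow _).symm
      _ ≤ (‖(A.map Complex.ofReal) ^ k‖₊ : ℝ≥0∞) ^ (1/(k:ℝ)) :=
          ENNReal.rpow_le_rpow h1 (by positivity)
  obtain ⟨z, hzmem, hz⟩ := spectrum.exists_nnnorm_eq_spectralRadius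
    (a := A.map Complex.ofReal)
  refine ⟨z, hzmem, ?_⟩
  rw [← hz] at hρ
  have : (1:ℝ≥0) ≤ ‖z‖₊ := by exact_mod_cast hρ
  exact_mod_cast this

end Helper

namespace Helper
variable {n : Type*} [Fintype n] [DecidableEq n] [Nonempty n]
attribute [local instance] Matrix.linftyOpNormedAddCommGroup Matrix.linftyOpNormedRing Matrix.linftyOpNormedAlgebra

theorem isEigOf_iff (M : Matrix n n ℝ) (μ : ℂ) :
    IsEigOf M μ ↔ μ ∈ spectrum ℂ (M.map Complex.ofReal) := by
  rw [mem_spec_iff]; rfl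

theorem eig_set_nonempty (M : Matrix n n ℝ) (f : ℂ → ℝ) :
    {x : ℝ | ∃ μ : ℂ, IsEigOf M μ ∧ x = f μ}.Nonempty := by
  obtain ⟨μ, hμ⟩ := spectrum.nonempty (M.map Complex.ofReal)
  exact ⟨f μ, μ, (isEigOf_iff M μ).mpr hμ, rfl⟩

theorem eig_set_bdd (M : Matrix n n ℝ) (f : ℂ → ℝ) (hf : ∀ μ, f μ ≤ ‖μ‖) :
    BddAbove {x : ℝ | ∃ μ : ℂ, IsEigOf M μ ∧ x = f μ} := by
  refine ⟨‖M.map Complex.ofReal‖, ?_⟩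
  rintro x ⟨μ, hμ, rfl⟩
  exact le_trans (hf μ)
    (spectrum.norm_le_norm_of_mem ((isEigOf_iff M μ).mp hμ))

theorem eig_sSup_lt_iff (M : Matrix n n ℝ) (f : ℂ → ℝ) (hf : Continuous f)
    (hb : ∀ μ, f μ ≤ ‖μ‖) (a : ℝ) :
    sSup {x : ℝ | ∃ μ : ℂ, IsEigOf M μ ∧ x = f μ} < a ↔
      ∀ μ ∈ spectrum ℂ (M.map Complex.ofReal), f μ < a := by
  constructor
  · intro h μ hμ
    exact lt_of_le_of_lt (le_csSup (eig_set_bdd M f hb)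
      ⟨μ, (isEigOf_iff M μ).mpr hμ, rfl⟩) h
  · intro h
    obtain ⟨z, hzmem, hzmax⟩ := (spectrum.isCompact (M.map Complex.ofReal)).exists_isMaxOn
      (spectrum.nonempty (M.map Complex.ofReal)) hf.continuousOn
    have hle : sSup {x : ℝ | ∃ μ : ℂ, IsEigOf M μ ∧ x = f μ} ≤ f z := by
      apply csSup_le (eig_set_nonempty M f)
      rintro x ⟨μ, hμ, rfl⟩
      exact hzmax ((isEigOf_iff M μ).mp hμ)
    exact lt_of_le_of_lt hle (h z hzmem)

theorem lamMax_neg_iff (M : Matrix n n ℝ) :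
    lamMax M < 0 ↔ ∀ μ ∈ spectrum ℂ (M.map Complex.ofReal), μ.re < 0 :=
  eig_sSup_lt_iff M Complex.re Complex.continuous_re
    (fun μ => by exact Complex.re_le_norm μ) 0

theorem specRad_lt_one_iff (M : Matrix n n ℝ) :
    specRad M < 1 ↔ ∀ μ ∈ spectrum ℂ (M.map Complex.ofReal), ‖μ‖ < 1 :=
  eig_sSup_lt_iff M norm continuous_norm (fun μ => le_rfl) 1

theorem spec_neg {B : Matrix n n ℝ} {ν : ℂ} (h : ν ∈ spectrum ℂ (B.map Complex.ofReal)) :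
    (-ν) ∈ spectrum ℂ ((-B).map Complex.ofReal) := by
  rw [mem_spec_iff] at h ⊢
  obtain ⟨v, hv, hvs⟩ := h
  refine ⟨v, hv, ?_⟩
  have hmap : (-B).map Complex.ofReal = -(B.map Complex.ofReal) := by
    ext i j; simp [Matrix.map_apply]
  rw [hmap, Matrix.neg_mulVec, hvs, neg_smul]

end Helper

open Helper

theorem stmt7 {n : Type*} [Fintype n] [DecidableEq n] [Nonempty n]
    (R P : Matrix n n ℝ) (hMet : IsMetzler R)
    (hHur : ∀ μ : ℂ, IsEigOf R μ → μ.re < 0)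
    (hP : ∀ i j, 0 ≤ P i j) :
    lamMax (R + P) < 0 ↔ specRad (R⁻¹ * P) < 1 := by
  classical
  have hHspec : ∀ μ ∈ spectrum ℂ (R.map Complex.ofReal), μ.re < 0 :=
    fun μ h => hHur μ ((isEigOf_iff R μ).mpr h)
  obtain ⟨G, hG0, hGR, hRG, hres⟩ := metzler_key R hMet hHspec
  have hRinv : R⁻¹ = -G := by
    apply Matrix.inv_eq_right_inv
    rw [Matrix.mul_neg, hRG, neg_neg]
  have hAeq : R⁻¹ * P = -(G * P) := by rw [hRinv, Matrix.neg_mul]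
  have hA0 : ∀ i j, 0 ≤ (G * P) i j := by
    intro i j
    rw [Matrix.mul_apply]
    exact Finset.sum_nonneg fun k _ => mul_nonneg (hG0 i k) (hP k j)
  have hmapadd : (R + P).map Complex.ofReal = R.map Complex.ofReal + P.map Complex.ofReal := by
    ext i j; simp [Matrix.map_apply]
  rw [lamMax_neg_iff, specRad_lt_one_iff]
  constructor
  · -- λmax < 0 ⇒ ρ < 1
    intro hL μ hμ
    by_contra hge
    push_neg at hge
    -- -μ is an eigenvalue of G * P
    have hν : (-μ) ∈ spectrum ℂ ((G * P).map Complex.ofReal) := by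
      have := spec_neg (B := R⁻¹ * P) hμ
      rwa [hAeq, neg_neg] at this
    rw [mem_spec_iff] at hν
    obtain ⟨v, hv, hvs⟩ := hν
    set w : n → ℝ := fun i => ‖v i‖ with hwdef
    have hw0 : ∀ i, 0 ≤ w i := fun i => norm_nonneg _
    have hwne : w ≠ 0 := by
      intro h
      apply hv
      funext i
      have : w i = 0 := congrFun h i
      simpa [hwdef] using this
    have hAw : ∀ i, w i ≤ ((G * P) *ᵥ w) i := by
      intro i
      have h1 : ((G * P).map Complex.ofReal *ᵥ v) i = (-μ) * v i := by
        rw [hvs]; rfl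
      have h2 : ‖(-μ) * v i‖ = ‖μ‖ * w i := by
        rw [norm_mul, norm_neg]
      have h3 : ‖((G * P).map Complex.ofReal *ᵥ v) i‖ ≤ ((G * P) *ᵥ w) i := by
        rw [Matrix.mulVec, dotProduct]
        refine le_trans (norm_sum_le _ _) ?_
        rw [Matrix.mulVec, dotProduct]
        apply Finset.sum_le_sum
        intro j _
        rw [Matrix.map_apply, norm_mul, Complex.norm_real, Real.norm_eq_abs,
          abs_of_nonneg (hA0 i j)]
      calc w i ≤ ‖μ‖ * w i := le_mul_of_one_le_left (hw0 i) hge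
        _ = ‖((G * P).map Complex.ofReal *ᵥ v) i‖ := by rw [h1, h2]
        _ ≤ ((G * P) *ᵥ w) i := h3
    -- R + P is Metzler Hurwitz
    obtain ⟨G', hG'0, hG'RP, hRPG', _⟩ := metzler_key (R + P)
      (fun i j hij => add_nonneg (hMet i j hij) (hP i j)) hL
    set M' : Matrix n n ℝ := 1 + G' * P with hM'def
    have hM'0 : ∀ i j, 0 ≤ M' i j := by
      intro i j
      have hgp : 0 ≤ (G' * P) i j := by
        rw [Matrix.mul_apply]
        exact Finset.sum_nonneg fun k _ => mul_nonneg (hG'0 i k) (hP k j)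
      have h1 : M' i j = (1 : Matrix n n ℝ) i j + (G' * P) i j := rfl
      rw [h1, Matrix.one_apply]
      by_cases h : i = j
      · rw [if_pos h]; linarith
      · rw [if_neg h]; linarith
    have e1 : M' = -(G' * R) := by
      have h := hG'RP
      rw [Matrix.mul_add] at h
      have h2 : G' * P = -1 - G' * R := by rw [← h]; abel
      rw [hM'def, h2]; abel
    have e2 : (1 : Matrix n n ℝ) - G * P = -(G * (R + P)) := by
      rw [Matrix.mul_add, hGR]; abel
    have hkey : M' * ((1 : Matrix n n ℝ) - G * P) = 1 := by
      rw [e1, e2]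
      have : -(G' * R) * -(G * (R + P)) = G' * ((R * G) * (R + P)) := by
        noncomm_ring
      rw [this, hRG]
      have : G' * (-1 * (R + P)) = -(G' * (R + P)) := by noncomm_ring
      rw [this, hG'RP, neg_neg]
    -- contradiction
    have hu : ∀ i, (((1 : Matrix n n ℝ) - G * P) *ᵥ w) i ≤ 0 := by
      intro i
      rw [Matrix.sub_mulVec, Matrix.one_mulVec]
      have := hAw i
      simp only [Pi.sub_apply]
      linarith
    have hwle : ∀ i, w i ≤ 0 := by
      intro i
      have hw' : w = M' *ᵥ (((1 : Matrix n n ℝ) - G * P) *ᵥ w) := by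
        rw [Matrix.mulVec_mulVec, hkey, Matrix.one_mulVec]
      have : w i = ∑ j, M' i j * (((1 : Matrix n n ℝ) - G * P) *ᵥ w) j := by
        conv_lhs => rw [hw']
        rfl
      rw [this]
      exact Finset.sum_nonpos fun j _ => mul_nonpos_of_nonneg_of_nonpos (hM'0 i j) (hu j)
    apply hwne
    funext i
    exact le_antisymm (hwle i) (hw0 i)
  · -- ρ < 1 ⇒ λmax < 0
    intro hS μ hμ
    by_contra hge
    push_neg at hge
    rw [mem_spec_iff] at hμ
    obtain ⟨v, hv, hvs⟩ := hμ
    obtain ⟨Sc, hSc1, hScb⟩ := hres μ hge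
    have hPv : v = Sc *ᵥ (P.map Complex.ofReal *ᵥ v) := by
      have h1 : (μ • (1 : Matrix n n ℂ) - R.map Complex.ofReal) *ᵥ v
          = P.map Complex.ofReal *ᵥ v := by
        rw [Matrix.sub_mulVec, Matrix.smul_mulVec, Matrix.one_mulVec]
        rw [hmapadd, Matrix.add_mulVec] at hvs
        linear_combination (norm := module) -hvs
      calc v = (1 : Matrix n n ℂ) *ᵥ v := (Matrix.one_mulVec v).symm
        _ = (Sc * (μ • (1 : Matrix n n ℂ) - R.map Complex.ofReal)) *ᵥ v := by rw [hSc1]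
        _ = Sc *ᵥ ((μ • (1 : Matrix n n ℂ) - R.map Complex.ofReal) *ᵥ v) := by
            rw [Matrix.mulVec_mulVec]
        _ = Sc *ᵥ (P.map Complex.ofReal *ᵥ v) := by rw [h1]
    set w : n → ℝ := fun i => ‖v i‖ with hwdef
    have hw0 : ∀ i, 0 ≤ w i := fun i => norm_nonneg _
    have hwne : w ≠ 0 := by
      intro h
      apply hv
      funext i
      have : w i = 0 := congrFun h i
      simpa [hwdef] using this
    have hPvb : ∀ j, ‖(P.map Complex.ofReal *ᵥ v) j‖ ≤ (P *ᵥ w) j := by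
      intro j
      rw [Matrix.mulVec, dotProduct]
      refine le_trans (norm_sum_le _ _) ?_
      rw [Matrix.mulVec, dotProduct]
      apply Finset.sum_le_sum
      intro k _
      rw [Matrix.map_apply, norm_mul, Complex.norm_real, Real.norm_eq_abs,
        abs_of_nonneg (hP j k)]
    have hw : ∀ i, w i ≤ ((G * P) *ᵥ w) i := by
      intro i
      have h1 : w i = ‖(Sc *ᵥ (P.map Complex.ofReal *ᵥ v)) i‖ := by
        rw [hwdef]
        simp only []
        conv_lhs => rw [hPv]
      rw [h1, Matrix.mulVec, dotProduct]
      refine le_trans (norm_sum_le _ _) ?_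
      have h2 : ∀ j, ‖Sc i j * (P.map Complex.ofReal *ᵥ v) j‖ ≤ G i j * (P *ᵥ w) j := by
        intro j
        rw [norm_mul]
        exact mul_le_mul (hScb i j) (hPvb j) (norm_nonneg _) (hG0 i j)
      refine le_trans (Finset.sum_le_sum fun j _ => h2 j) ?_
      rw [← Matrix.mulVec_mulVec, Matrix.mulVec, dotProduct]
    obtain ⟨ν, hνmem, hν1⟩ := exists_eig_ge_one hA0 hw0 hwne hw
    have hneg : (-ν) ∈ spectrum ℂ ((R⁻¹ * P).map Complex.ofReal) := by
      have := spec_neg (B := G * P) hνmem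
      rwa [← hAeq] at this
    have := hS (-ν) hneg
    rw [norm_neg] at this
    linarith


end
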